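/- Let a_1 ≤ a_2 ≤ ... ≤ a_n and s_1, ..., s_n > 0 be real numbers, and define FIFO departure times by d_1 = a_1 + s_1 and d_i = max(a_i, d_{i−1}) + s_i for i ≥ 2. Set W_i := (a_i − d_{i−1})⁺ for i ≥ 2 and A_j := a_j − a_{j−1}. Fix 1 ≤ k < i ≤ n and suppose that W_j = 0 for all j with k < j < i, and that either k = 1 or W_k > 0. Then W_i = (∑_{j=k+1}^{i} A_j − ∑_{j=k}^{i−1} s_j)⁺. -/
import Mathlib


/-- FIFO departure times: `dep a s 0 = a 0 + s 0` and
`dep a s (i+1) = max (a (i+1)) (dep a s i) + s (i+1)`. -/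
noncomputable def dep (a s : ℕ → ℝ) : ℕ → ℝ
  | 0 => a 0 + s 0
  | i + 1 => max (a (i + 1)) (dep a s i) + s (i + 1)

lemma telescope_Ioc (a : ℕ → ℝ) (k : ℕ) :
    ∀ i, k ≤ i → ∑ j ∈ Finset.Ioc k i, (a j - a (j - 1)) = a i - a k := by
  intro i
  induction i with
  | zero => intro h; simp [Nat.le_zero.mp h]
  | succ m ih =>
    intro h
    rcases Nat.lt_or_ge k (m + 1) with hlt | hge
    · have hkm : k ≤ m := Nat.lt_succ_iff.mp hlt
      rw [Finset.sum_Ioc_succ_top hkm, ih hkm]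
      simp only [Nat.add_sub_cancel]
      ring
    · have : k = m + 1 := le_antisymm h hge
      subst this; simp

/-- 0-indexed: with non-decreasing arrivals `a`, positive service times
`s`, departures `d = dep a s`, waiting/idle times `W_j := (a_j − d_{j−1})⁺` and
interarrival times `A_j := a_j − a_{j−1}`, if `k < i < n`, `W_j = 0` for all `k < j < i`,
and either `k = 0` or `W_k > 0`, then
`W_i = (∑_{j=k+1}^{i} A_j − ∑_{j=k}^{i−1} s_j)⁺`. -/
theorem waiting_time_formula
    (n : ℕ) (a s : ℕ → ℝ)
    (hmono : ∀ i j, i ≤ j → j < n → a i ≤ a j) (hspos : ∀ i, i < n → 0 < s i)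
    (k i : ℕ) (hki : k < i) (hin : i < n)
    (hzero : ∀ j, k < j → j < i → max (a j - dep a s (j - 1)) 0 = 0)
    (hk : k = 0 ∨ 0 < max (a k - dep a s (k - 1)) 0) :
    max (a i - dep a s (i - 1)) 0
      = max ((∑ j ∈ Finset.Ioc k i, (a j - a (j - 1))) - ∑ j ∈ Finset.Ico k i, s j) 0 := by
  -- key: dep a s m = a k + ∑_{j∈Icc k m} s j for k ≤ m < i
  have key : ∀ m, k ≤ m → m < i → dep a s m = a k + ∑ j ∈ Finset.Icc k m, s j := by
    intro m
    induction m with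
    | zero =>
      intro hkm _
      have hk0 : k = 0 := Nat.le_zero.mp hkm
      subst hk0
      simp [dep]
    | succ m ih =>
      intro hkm hmi
      rcases Nat.lt_or_ge k (m + 1) with hlt | hge
      ·
        have hkm' : k ≤ m := Nat.lt_succ_iff.mp hlt
        have hW : max (a (m + 1) - dep a s m) 0 = 0 := by
          have := hzero (m + 1) hlt hmi
          simpa using this
        have hle : a (m + 1) ≤ dep a s m := by
          by_contra h
          push_neg at h
          have : 0 < max (a (m + 1) - dep a s m) 0 :=
            lt_max_of_lt_left (by linarith)
          linarith [this.trans_eq hW]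
        have ihm := ih hkm' (Nat.lt_of_succ_lt hmi)
        rw [show dep a s (m + 1) = max (a (m + 1)) (dep a s m) + s (m + 1) from rfl,
          max_eq_right hle, ihm, Finset.sum_Icc_succ_top hlt.le]
        ring
      · -- k = m + 1
        have hk' : k = m + 1 := le_antisymm hkm hge
        subst hk'
        rcases hk with h0 | hpos
        · omega
        · simp only [Nat.add_sub_cancel] at hpos
          have hgt : dep a s m < a (m + 1) := by
            by_contra h
            push_neg at h
            have : max (a (m + 1) - dep a s m) 0 = 0 :=
              max_eq_right (by linarith)
            linarith
          show max (a (m + 1)) (dep a s m) + s (m + 1) = _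
          rw [max_eq_left hgt.le]
          simp
  have hi1 : i - 1 + 1 = i := by omega
  have hki1 : k ≤ i - 1 := by omega
  have hd : dep a s (i - 1) = a k + ∑ j ∈ Finset.Icc k (i - 1), s j :=
    key (i - 1) hki1 (by omega)
  have hIco : Finset.Ico k i = Finset.Icc k (i - 1) := by
    ext x; simp; omega
  rw [telescope_Ioc a k i hki.le, hd, hIco]
  congr 1
  ring
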